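/- For every integer m ≥ 2, assuming Gauss' digamma theorem, ∑_{r=1}^{m-1} cot(πr/m)·ψ(r/m) = -π(m-1)(m-2)/6. -/

import Mathlib

open Real Finset

lemma aux_cot_pi_sub (x : ℝ) : Real.cot (π - x) = -Real.cot x := by
  rw [Real.cot_eq_cos_div_sin, Real.cot_eq_cos_div_sin, Real.cos_pi_sub, Real.sin_pi_sub, neg_div]

lemma aux_antisym (m : ℕ) (hm : 2 ≤ m) (f : ℕ → ℝ)
    (hf : ∀ r, 1 ≤ r → r ≤ m - 1 → f (m - r) = f r) :
    ∑ r ∈ Finset.Icc 1 (m - 1), Real.cot (π * r / m) * f r = 0 := by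
  have hm0 : (m:ℝ) ≠ 0 := by positivity
  have key : ∀ a ∈ Finset.Icc 1 (m-1),
      Real.cot (π * a / m) * f a + Real.cot (π * (↑(m - a)) / m) * f (m - a) = 0 := by
    intro a ha
    simp only [Finset.mem_Icc] at ha
    have hle : a ≤ m := by omega
    have hcast : ((m - a : ℕ) : ℝ) = m - a := by push_cast [hle]; ring
    have harg : π * (↑(m - a)) / m = π - π * a / m := by
      rw [hcast]; field_simp
    rw [harg, aux_cot_pi_sub, hf a ha.1 ha.2]
    ring
  refine Finset.sum_involution (fun a _ => m - a) (fun a ha => key a ha) ?_ ?_ ?_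
  · intro a ha hne h
    apply hne
    have hthis := key a ha
    rw [h] at hthis
    linarith
  · intro a ha
    simp only [Finset.mem_Icc] at ha ⊢
    omega
  · intro a ha
    simp only [Finset.mem_Icc] at ha
    omega


lemma aux_sum_id (n : ℕ) : ∑ k ∈ range n, (k:ℂ) = n*(n-1)/2 := by
  induction n with
  | zero => simp
  | succ n ih => rw [Finset.sum_range_succ, ih]; push_cast; ring

lemma aux_sum_sq (n : ℕ) : ∑ k ∈ range n, (k:ℂ)^2 = n*(n-1)*(2*n-1)/6 := by
  induction n with
  | zero => simp
  | succ n ih => rw [Finset.sum_range_succ, ih]; push_cast; ring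

lemma aux_wgeom (u : ℂ) (n : ℕ) :
    (u - 1) * ∑ k ∈ range n, (k:ℂ) * u^k
      = n*u^n - u^n + 1 - ∑ k ∈ range n, u^k := by
  induction n with
  | zero => simp
  | succ n ih =>
    rw [Finset.sum_range_succ, Finset.sum_range_succ (fun k => u^k), mul_add, ih]
    push_cast; ring

lemma aux_cot_sq_sum (m : ℕ) (hm : 2 ≤ m) :
    ∑ r ∈ Finset.Icc 1 (m - 1), (Real.cot (π * r / m))^2 = ((m:ℝ)-1)*((m:ℝ)-2)/3 := by
  have hm0 : (m:ℝ) ≠ 0 := by positivity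
  have hmC : (m:ℂ) ≠ 0 := by exact_mod_cast Nat.cast_ne_zero.mpr (by omega)
  set ω : ℂ := Complex.exp (2*π*Complex.I/m) with hω
  -- powers of ω
  have hωk : ∀ k : ℕ, ω^k = Complex.exp (2*π*Complex.I*k/m) := by
    intro k
    rw [hω, ← Complex.exp_nat_mul]
    ring_nf
  have hω1 : ∀ k : ℕ, ω^k = 1 ↔ m ∣ k := by
    intro k
    rw [hωk, Complex.exp_eq_one_iff]
    constructor
    · rintro ⟨n, hn⟩
      have hπ : (π:ℂ) ≠ 0 := by exact_mod_cast Real.pi_ne_zero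
      have : (k:ℂ) = n * m := by
        field_simp at hn
        have hI : Complex.I ≠ 0 := Complex.I_ne_zero
        -- 2*π*I*k = n*(2*π*I)*m
        have h2 : (k:ℂ) * (2*π*Complex.I) = (n:ℂ) * m * (2*π*Complex.I) := by
          linear_combination (2*π*Complex.I) * hn
        have := mul_right_cancel₀ (by simp [hπ, hI] : (2*(π:ℂ)*Complex.I) ≠ 0) h2
        exact this
      have hint : (k:ℤ) = n * m := by exact_mod_cast this
      exact Int.natCast_dvd_natCast.mp ⟨n, by linarith⟩
    · rintro ⟨c, rfl⟩
      exact ⟨c, by push_cast; field_simp⟩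
  have hωm : ω^m = 1 := (hω1 m).mpr dvd_rfl
  -- orthogonality
  have orth : ∀ k : ℕ, ∑ r ∈ range m, (ω^k)^r = if m ∣ k then (m:ℂ) else 0 := by
    intro k
    by_cases h : m ∣ k
    · rw [if_pos h, (hω1 k).mpr h]; simp
    · rw [if_neg h]
      have hne : ω^k ≠ 1 := fun hc => h ((hω1 k).mp hc)
      rw [geom_sum_eq hne]
      have hpm : (ω^k)^m = 1 := by
        rw [← pow_mul, mul_comm, pow_mul, hωm, one_pow]
      rw [hpm]; simp
  set T : ℂ → ℂ := fun u => ∑ k ∈ range m, (k:ℂ)*u^k with hT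
  have hT1 : T 1 = (m:ℂ)*((m:ℂ)-1)/2 := by
    simp only [hT, one_pow, mul_one]
    exact aux_sum_id m
  -- per-root facts
  have hne : ∀ r ∈ Finset.Ico 1 m, ω^r ≠ 1 := by
    intro r hr hc
    simp only [Finset.mem_Ico] at hr
    have := (hω1 r).mp hc
    have := Nat.le_of_dvd (by omega) this
    omega
  have hpow : ∀ r : ℕ, (ω^r)^m = 1 := by
    intro r
    rw [← pow_mul, mul_comm, pow_mul, hωm, one_pow]
  have hgeo : ∀ r ∈ Finset.Ico 1 m, ∑ k ∈ range m, (ω^r)^k = 0 := by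
    intro r hr
    rw [geom_sum_eq (hne r hr), hpow]; simp
  have hTu : ∀ r ∈ Finset.Ico 1 m, (ω^r - 1) * T (ω^r) = m := by
    intro r hr
    rw [hT]
    rw [aux_wgeom (ω^r) m, hpow r, hgeo r hr]
    ring
  -- cot in terms of T
  have hcot : ∀ r ∈ Finset.Ico 1 m,
      ((Real.cot (π*r/m) : ℂ)) = Complex.I + (2*Complex.I/(m:ℂ)) * T (ω^r) := by
    intro r hr
    have hexp : Complex.exp (2*Complex.I*((π*r/m : ℝ):ℂ)) = ω^r := by
      rw [hωk r]
      congr 1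
      push_cast
      ring
    rw [Complex.ofReal_cot, Complex.cot_eq_exp_ratio, hexp]
    have h1u : 1 - ω^r ≠ 0 := by
      intro hc
      exact hne r hr (by linear_combination -hc)
    rw [div_eq_iff (mul_ne_zero Complex.I_ne_zero h1u)]
    have hI2 : Complex.I^2 = -1 := Complex.I_sq
    have h := hTu r hr
    field_simp
    ring_nf
    linear_combination (ω^r*(m:ℂ) + 2*ω^r*T (ω^r) - (m:ℂ) - 2*T (ω^r))*hI2 - 2*h
  -- S1
  have hswap1 : ∑ r ∈ range m, T (ω^r) = 0 := by
    simp only [hT]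
    rw [Finset.sum_comm]
    refine Finset.sum_eq_zero fun k hk => ?_
    simp only [Finset.mem_range] at hk
    rw [← Finset.mul_sum]
    by_cases h0 : k = 0
    · subst h0; simp
    · have hpc : ∀ r, (ω^r)^k = (ω^k)^r := fun r => by
        rw [← pow_mul, ← pow_mul, mul_comm]
      rw [Finset.sum_congr rfl (fun r _ => hpc r), orth k, if_neg]
      · ring
      · intro hd; have := Nat.le_of_dvd (by omega) hd; omega
  have hsplit : ∀ f : ℕ → ℂ, ∑ r ∈ range m, f r = f 0 + ∑ r ∈ Finset.Ico 1 m, f r := by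
    intro f
    rw [Finset.range_eq_Ico, Finset.sum_eq_sum_Ico_succ_bot (by omega : 0 < m)]
  have hS1 : ∑ r ∈ Finset.Ico 1 m, T (ω^r) = -((m:ℂ)*((m:ℂ)-1)/2) := by
    have h0 := hsplit (fun r => T (ω^r))
    simp only [pow_zero] at h0
    rw [hswap1] at h0
    linear_combination -h0 - hT1
  -- S2
  have hswap2 : ∑ r ∈ range m, (T (ω^r))^2 = (m:ℂ) * ∑ j ∈ range m, ((j:ℂ)*((m:ℂ)-(j:ℂ))) := by
    have hexpand : ∀ r ∈ range m, (T (ω^r))^2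
        = ∑ j ∈ range m, ∑ k ∈ range m, (j:ℂ)*(k:ℂ)*(ω^(j+k))^r := by
      intro r _
      simp only [hT]
      rw [sq, Finset.sum_mul_sum]
      refine Finset.sum_congr rfl fun j _ => Finset.sum_congr rfl fun k _ => ?_
      have hw : (ω^(j+k))^r = (ω^r)^j * (ω^r)^k := by
        rw [← pow_mul, ← pow_mul, ← pow_mul, ← pow_add]
        congr 1
        ring
      rw [hw]; ring
    rw [Finset.sum_congr rfl hexpand, Finset.sum_comm]
    have hinner : ∀ j ∈ range m, (∑ r ∈ range m, ∑ k ∈ range m, (j:ℂ)*(k:ℂ)*(ω^(j+k))^r)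
        = (j:ℂ)*((m:ℂ)-(j:ℂ))*(m:ℂ) := by
      intro j hj
      simp only [Finset.mem_range] at hj
      rw [Finset.sum_comm]
      have hk : ∀ k ∈ range m, (∑ r ∈ range m, (j:ℂ)*(k:ℂ)*(ω^(j+k))^r)
          = (j:ℂ)*(k:ℂ)*(if m ∣ (j+k) then (m:ℂ) else 0) := by
        intro k _
        rw [← Finset.mul_sum]
        have hpc : ∀ r, (ω^(j+k))^r = (ω^(j+k))^r := fun _ => rfl
        rw [orth (j+k)]
      rw [Finset.sum_congr rfl hk]
      by_cases h0 : j = 0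
      · subst h0
        simp only [Nat.cast_zero, zero_mul]
        simp
      · rw [Finset.sum_eq_single (m - j)]
        · have hjm : j + (m - j) = m := by omega
          rw [if_pos (by rw [hjm] : m ∣ (j + (m - j)))]
          have : ((m - j : ℕ):ℂ) = (m:ℂ) - (j:ℂ) := by
            push_cast [le_of_lt hj]
            ring
          rw [this]
        · intro k hkr hkne
          simp only [Finset.mem_range] at hkr
          rw [if_neg, mul_zero]
          intro hd
          have h1 : m ≤ j + k := Nat.le_of_dvd (by omega) hd
          have h3 : m ∣ (j + k - m) := (Nat.dvd_sub hd dvd_rfl)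
          have h4 : j + k - m < m := by omega
          have h5 : j + k - m = 0 := Nat.eq_zero_of_dvd_of_lt h3 h4
          omega
        · intro hnot
          exact absurd (Finset.mem_range.mpr (by omega)) hnot
    rw [Finset.sum_congr rfl hinner, ← Finset.sum_mul]
    ring
  have hsumjm : ∑ j ∈ range m, ((j:ℂ)*((m:ℂ)-(j:ℂ)))
      = (m:ℂ)*((m:ℂ)*((m:ℂ)-1)/2) - (m:ℂ)*((m:ℂ)-1)*(2*(m:ℂ)-1)/6 := by
    have h1 := aux_sum_id m
    have h2 := aux_sum_sq m
    have hsplit2 : ∑ j ∈ range m, ((j:ℂ)*((m:ℂ)-(j:ℂ)))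
        = (m:ℂ) * (∑ j ∈ range m, (j:ℂ)) - ∑ j ∈ range m, (j:ℂ)^2 := by
      rw [Finset.mul_sum, ← Finset.sum_sub_distrib]
      exact Finset.sum_congr rfl fun j _ => by ring
    rw [hsplit2, h1, h2]
  have hS2 : ∑ r ∈ Finset.Ico 1 m, (T (ω^r))^2
      = (m:ℂ) * ((m:ℂ)*((m:ℂ)*((m:ℂ)-1)/2) - (m:ℂ)*((m:ℂ)-1)*(2*(m:ℂ)-1)/6)
        - ((m:ℂ)*((m:ℂ)-1)/2)^2 := by
    have h0 := hsplit (fun r => (T (ω^r))^2)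
    simp only [pow_zero] at h0
    rw [hswap2, hsumjm] at h0
    rw [hT1] at h0
    linear_combination -h0
  -- assemble
  have hIcc : Finset.Icc 1 (m-1) = Finset.Ico 1 m := by
    rw [← Finset.Ico_add_one_right_eq_Icc]
    congr 1
    omega
  rw [hIcc]
  rw [← Complex.ofReal_inj]
  push_cast [-Complex.ofReal_cot]
  have hsq : ∀ r ∈ Finset.Ico 1 m, ((Real.cot (π*r/m) : ℂ))^2
      = -1 - (4/(m:ℂ))*T (ω^r) - (4/(m:ℂ)^2)*(T (ω^r))^2 := by
    intro r hr
    rw [hcot r hr]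
    have hI2 : Complex.I^2 = -1 := Complex.I_sq
    field_simp
    ring_nf
    linear_combination (4*(m:ℂ)*(T (ω^r)) + (m:ℂ)^2 + 4*(T (ω^r))^2)*hI2
  rw [Finset.sum_congr rfl hsq]
  rw [Finset.sum_sub_distrib, Finset.sum_sub_distrib, ← Finset.mul_sum, ← Finset.mul_sum,
    hS1, hS2, Finset.sum_const, Nat.card_Ico]
  have hc1 : ((m - 1 : ℕ):ℂ) = (m:ℂ) - 1 := by
    have h1m : 1 ≤ m := by omega
    push_cast [h1m]
    ring
  rw [nsmul_eq_mul, hc1]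
  field_simp
  ring


/-- The digamma function ψ(x) = Γ'(x)/Γ(x). -/
noncomputable def digamma (x : ℝ) : ℝ := deriv Real.Gamma x / Real.Gamma x

theorem stmt14 (m : ℕ) (hm : 2 ≤ m)
    (hGauss : ∀ r : ℕ, 1 ≤ r → r ≤ m - 1 →
      digamma (r / m) =
        -Real.eulerMascheroniConstant - Real.log (2 * m) - (π / 2) * Real.cot (π * r / m)
          + ∑ l ∈ Finset.Icc 1 (m - 1),
              Real.cos (2 * π * r * l / m) * Real.log (Real.sin (π * l / m))) :
    (∑ r ∈ Finset.Icc 1 (m - 1), Real.cot (π * r / m) * digamma (r / m)) =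
      -π * (m - 1) * (m - 2) / 6 := by
  have hm0 : (m:ℝ) ≠ 0 := by positivity
  have hstep : ∀ r ∈ Finset.Icc 1 (m-1),
      Real.cot (π * r / m) * digamma (r / m)
        = Real.cot (π * r / m) * ((-Real.eulerMascheroniConstant - Real.log (2*m))
            + ∑ l ∈ Finset.Icc 1 (m-1), Real.cos (2*π*r*l/m) * Real.log (Real.sin (π*l/m)))
          - (π/2) * (Real.cot (π*r/m))^2 := by
    intro r hr
    simp only [Finset.mem_Icc] at hr
    rw [hGauss r hr.1 hr.2]
    ring
  rw [Finset.sum_congr rfl hstep, Finset.sum_sub_distrib, ← Finset.mul_sum]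
  set f : ℕ → ℝ := fun r => (-Real.eulerMascheroniConstant - Real.log (2*m))
      + ∑ l ∈ Finset.Icc 1 (m-1), Real.cos (2*π*r*l/m) * Real.log (Real.sin (π*l/m)) with hf
  have hsym : ∀ r, 1 ≤ r → r ≤ m-1 → f (m - r) = f r := by
    intro r h1 h2
    simp only [hf]
    congr 1
    refine Finset.sum_congr rfl fun l hl => ?_
    have hcast : ((m - r : ℕ):ℝ) = (m:ℝ) - r := by
      have : r ≤ m := by omega
      push_cast [this]
      ring
    have hcos : Real.cos (2*π*((m - r : ℕ):ℝ)*l/m) = Real.cos (2*π*r*l/m) := by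
      rw [hcast, show 2*π*((m:ℝ) - r)*l/m = (l:ℝ)*(2*π) - 2*π*r*l/m by field_simp,
        Real.cos_nat_mul_two_pi_sub]
    rw [hcos]
  rw [aux_antisym m hm f hsym, aux_cot_sq_sum m hm]
  ring
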